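/- Let A be a nontrivial commutative ring, let F ∈ A[y] be monic of degree d, and let N be a positive divisor of d whose image in A is a unit; set m := d/N. Let G ∈ A⟦y⟧ be the reversal of F, i.e., the power series whose coefficient of y^j is the coefficient of y^{d−j} in F (so G has constant coefficient 1 since F is monic), and let S ∈ A⟦y⟧ be the unique power series with constant coefficient 1 satisfying S^N = G. Then the polynomial ψ := Σ_{i=0}^{m} s_{m−i}·y^i, where s_j denotes the coefficient of y^j in S, is the N-th approximate root of F: it is monic of degree m and deg(F − ψ^N) < d − m. -/

import Mathlib

open Polynomial Finset

lemma my_reflect_pow {A : Type*} [CommRing A] (f : A[X]) (M n : ℕ) (hf : f.natDegree ≤ M) :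
    Polynomial.reflect (M * n) (f ^ n) = (Polynomial.reflect M f) ^ n := by
  induction n with
  | zero => simp [reflect_one]
  | succ n ih =>
    have hfn : (f ^ n).natDegree ≤ M * n :=
      (natDegree_pow_le_of_le n hf).trans_eq (mul_comm n M)
    rw [pow_succ, pow_succ, ← ih, Nat.mul_succ, reflect_mul _ _ hfn hf]

theorem approximate_root_from_reversal {A : Type*} [CommRing A] [Nontrivial A]
    (F : A[X]) (d N m : ℕ) (hF : F.Monic) (hFd : F.natDegree = d)
    (hN : 0 < N) (hdvd : N ∣ d) (hunit : IsUnit (N : A)) (hm : m = d / N)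
    (G S : PowerSeries A)
    (hG : ∀ j : ℕ, PowerSeries.coeff j G = if j ≤ d then F.coeff (d - j) else 0)
    (hS1 : PowerSeries.constantCoeff S = 1) (hSN : S ^ N = G) :
    (∑ i ∈ Finset.range (m + 1),
        Polynomial.C (PowerSeries.coeff (m - i) S) * Polynomial.X ^ i).Monic ∧
    (∑ i ∈ Finset.range (m + 1),
        Polynomial.C (PowerSeries.coeff (m - i) S) * Polynomial.X ^ i).natDegree = m ∧
    (F - (∑ i ∈ Finset.range (m + 1),
        Polynomial.C (PowerSeries.coeff (m - i) S) * Polynomial.X ^ i) ^ N).degree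
      < ((d - m : ℕ) : WithBot ℕ) := by
  have hmN : m * N = d := by rw [hm, Nat.div_mul_cancel hdvd]
  have hmd : m ≤ d := hmN ▸ Nat.le_mul_of_pos_right m hN
  set T : A[X] := PowerSeries.trunc (m + 1) S with hT
  have hTdeg : T.natDegree ≤ m := Nat.lt_succ_iff.mp (PowerSeries.natDegree_trunc_lt S m)
  set ψ : A[X] := ∑ i ∈ Finset.range (m + 1),
      Polynomial.C (PowerSeries.coeff (m - i) S) * Polynomial.X ^ i with hψ
  have hψeq : ψ = Polynomial.reflect m T := by
    ext k
    rw [coeff_reflect]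
    simp only [hψ, finset_sum_coeff, coeff_C_mul, coeff_X_pow, mul_ite, mul_one, mul_zero,
      Finset.sum_ite_eq (Finset.range (m+1)), Finset.mem_range, Nat.lt_succ_iff]
    by_cases hk : k ≤ m
    · rw [if_pos hk, revAt_le hk, hT, PowerSeries.coeff_trunc, if_pos (by omega)]
    · rw [if_neg hk]
      have : m < revAt m k := by
        rw [revAt_eq_self_of_lt (by omega)]; omega
      exact (Polynomial.coeff_eq_zero_of_natDegree_lt (lt_of_le_of_lt hTdeg this)).symm
  have hψm : ψ.coeff m = 1 := by
    rw [hψeq, coeff_reflect, revAt_le le_rfl, Nat.sub_self, hT, PowerSeries.coeff_trunc,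
      if_pos (Nat.succ_pos m)]
    rw [PowerSeries.coeff_zero_eq_constantCoeff, hS1]
  have hψdeg : ψ.natDegree ≤ m := by
    refine natDegree_le_iff_coeff_eq_zero.mpr fun k hk => ?_
    rw [hψeq, coeff_reflect]
    have : m < revAt m k := by
      rw [revAt_eq_self_of_lt (by omega)]; omega
    exact Polynomial.coeff_eq_zero_of_natDegree_lt (lt_of_le_of_lt hTdeg this)
  have hψnd : ψ.natDegree = m :=
    le_antisymm hψdeg (le_natDegree_of_ne_zero (by rw [hψm]; exact one_ne_zero))
  have hmonic : ψ.Monic := by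
    rw [Monic, leadingCoeff, hψnd, hψm]
  refine ⟨hmonic, hψnd, ?_⟩
  have hψpow : ψ ^ N = Polynomial.reflect d (T ^ N) := by
    rw [hψeq, ← my_reflect_pow T m N hTdeg, hmN]
  have hdvdpow : (PowerSeries.X : PowerSeries A) ^ (m + 1) ∣ S ^ N - (T : PowerSeries A) ^ N := by
    have h1 : (PowerSeries.X : PowerSeries A) ^ (m + 1) ∣ S - (T : PowerSeries A) := by
      rw [PowerSeries.X_pow_dvd_iff]
      intro j hj
      simp [hT, PowerSeries.coeff_trunc, if_pos hj, Polynomial.coeff_coe, Nat.le_of_lt_succ hj]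
    exact h1.trans (sub_dvd_pow_sub_pow _ _ N)
  have hcoeq : ∀ j ≤ m, (T ^ N).coeff j = F.coeff (d - j) := by
    intro j hj
    have h0 : PowerSeries.coeff j (S ^ N - (T : PowerSeries A) ^ N) = 0 := by
      rw [PowerSeries.X_pow_dvd_iff] at hdvdpow
      exact hdvdpow j (by omega)
    rw [map_sub, sub_eq_zero] at h0
    have h2 : PowerSeries.coeff j ((T : PowerSeries A) ^ N) = (T ^ N).coeff j := by
      rw [← Polynomial.coe_pow, Polynomial.coeff_coe]
    rw [← h2, ← h0, hSN, hG j, if_pos (by omega)]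
  rw [Polynomial.degree_lt_iff_coeff_zero]
  intro k hk
  have hk' : d - m ≤ k := by exact_mod_cast hk
  rw [Polynomial.coeff_sub, sub_eq_zero]
  by_cases hkd : k ≤ d
  · rw [hψpow, coeff_reflect, revAt_le hkd, hcoeq (d - k) (by omega)]
    congr 1; omega
  · rw [Polynomial.coeff_eq_zero_of_natDegree_lt (by omega : F.natDegree < k),
      Polynomial.coeff_eq_zero_of_natDegree_lt]
    calc (ψ ^ N).natDegree ≤ N * m := natDegree_pow_le_of_le N hψdeg
      _ = d := by rw [mul_comm]; exact hmN
      _ < k := by omega
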